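/- arXiv:2208.02691 — 2 statements merged into one kernel-verified Lean document; each statement's English description precedes it below -/
import Mathlib

section
/- Let Q ≥ 1 and let l ∈ ℕ satisfy 2^l > Q^(Q · Q^(2Q)). Then there exist two distinct binary words a, b of length l that are Q-indistinguishable, i.e., for every transition function δ : S × {0,1} → S on a set S of size Q and every state s ∈ S, reading a from s and reading b from s lead to the same state. -/
/-- Binary words `x` and `y` are `Q`-indistinguishable: for every set `S` of size `Q`,
every transition function `δ : S → {0,1} → S` and every start state `s`, reading `x`
from `s` and reading `y` from `s` lead to the same state. -/
def QIndist (Q : ℕ) (x y : List Bool) : Prop :=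
  ∀ (S : Type) (_ : Fintype S), Fintype.card S = Q →
    ∀ (δ : S → Bool → S) (s : S), x.foldl δ s = y.foldl δ s

lemma foldl_equiv {S T : Type} (e : S ≃ T) (δ : S → Bool → S) :
    ∀ (x : List Bool) (s : S),
      e (x.foldl δ s) = x.foldl (fun t b => e (δ (e.symm t) b)) (e s) := by
  intro x
  induction x with
  | nil => intro s; simp
  | cons h t ih =>
    intro s
    simp only [List.foldl_cons]
    rw [ih]
    simp

theorem exists_indistinguishable_pair (Q l : ℕ) (hQ : 1 ≤ Q)
    (hl : Q ^ (Q * Q ^ (2 * Q)) < 2 ^ l) :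
    ∃ a b : List Bool, a.length = l ∧ b.length = l ∧ a ≠ b ∧ QIndist Q a b := by
  set F : (Fin l → Bool) → ((Fin Q → Bool → Fin Q) × Fin Q) → Fin Q :=
    fun v p => (List.ofFn v).foldl p.1 p.2 with hF
  have hcard : Fintype.card (((Fin Q → Bool → Fin Q) × Fin Q) → Fin Q) <
      Fintype.card (Fin l → Bool) := by
    simp only [Fintype.card_fun, Fintype.card_prod, Fintype.card_fin,
      Fintype.card_bool]
    convert hl using 2
    rw [← pow_mul, ← pow_succ']
    ring_nf
  obtain ⟨v, w, hvw, hfeq⟩ := Fintype.exists_ne_map_eq_of_card_lt F hcard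
  refine ⟨List.ofFn v, List.ofFn w, by simp, by simp, ?_, ?_⟩
  · intro h
    exact hvw (List.ofFn_injective h)
  · intro S _ hS δ s
    obtain ⟨e⟩ : Nonempty (S ≃ Fin Q) := by
      rw [← Fintype.card_fin Q] at hS
      exact ⟨Fintype.equivOfCardEq hS⟩
    have key := congrFun hfeq (fun t b => e (δ (e.symm t) b), e s)
    have h1 := foldl_equiv e δ (List.ofFn v) s
    have h2 := foldl_equiv e δ (List.ofFn w) s
    apply e.injective
    rw [h1, h2]
    exact key
end

section
/- There exist two infinite sequences of bits I⁰ = {I⁰_n}_{n=0}^∞ ∈ {0,1}^ω and I¹ = {I¹_n}_{n=0}^∞ ∈ {0,1}^ω such that for every Q ∈ ℕ there exist t ∈ ℕ and two Q-indistinguishable binary words x = x_0…x_{t−1} and y = y_0…y_{t−1} of length t with I^{x_0}_0 ⊕ … ⊕ I^{x_{t−1}}_{t−1} ≠ I^{y_0}_0 ⊕ … ⊕ I^{y_{t−1}}_{t−1}, where ⊕ denotes XOR. -/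
/-- Given two bit sequences `I false, I true : ℕ → Bool` and a word `w = w_0 … w_{t−1}`,
this is the XOR `I^{w_0}_0 ⊕ … ⊕ I^{w_{t−1}}_{t−1}`. -/
def xorSum (I : Bool → ℕ → Bool) (w : List Bool) : Bool :=
  (w.zipIdx.map (fun q => I q.1 q.2)).foldl xor false

/-- The test bit sequence: `J n = true` iff `n` is a factorial. -/
def Jseq (n : ℕ) : Bool := decide (∃ m < n + 1, n = Nat.factorial m)

lemma Jseq_factorial (N : ℕ) : Jseq (Nat.factorial N) = true := by
  simp only [Jseq, decide_eq_true_eq]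
  exact ⟨N, by have := Nat.self_le_factorial N; omega, rfl⟩

lemma Jseq_two_mul_factorial {N : ℕ} (hN : 2 ≤ N) : Jseq (2 * Nat.factorial N) = false := by
  simp only [Jseq, decide_eq_false_iff_not]
  rintro ⟨m, -, hm⟩
  have hpos := Nat.factorial_pos N
  rcases le_or_gt m N with h | h
  · have := Nat.factorial_le h
    omega
  · have h1 : Nat.factorial (N + 1) ≤ Nat.factorial m := Nat.factorial_le h
    have h2 : Nat.factorial (N + 1) = (N + 1) * Nat.factorial N := rfl
    nlinarith

lemma foldl_replicate {S : Type} (δ : S → Bool → S) (c : Bool) :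
    ∀ (n : ℕ) (s : S), List.foldl δ s (List.replicate n c) = (fun t => δ t c)^[n] s := by
  intro n
  induction n with
  | zero => intro s; rfl
  | succ k ih =>
    intro s
    rw [List.replicate_succ, List.foldl_cons, ih, Function.iterate_succ_apply]

/-- Eventual periodicity of iteration on a finite type. -/
lemma iterate_eq_of_mod {S : Type} [Fintype S] (f : S → S) (s : S) {a b : ℕ}
    (hab : a ≤ b) (ha : Fintype.card S ≤ a)
    (hd : Nat.factorial (Fintype.card S) ∣ b - a) : f^[a] s = f^[b] s := by
  set Q := Fintype.card S with hQ
  -- pigeonhole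
  obtain ⟨i, j, hij, hfij⟩ :=
    Fintype.exists_ne_map_eq_of_card_lt (fun i : Fin (Q + 1) => f^[(i : ℕ)] s)
      (by simp [← hQ])
  -- wlog i < j
  obtain ⟨m, n, hmn, heq⟩ : ∃ m n : ℕ, m < n ∧ n ≤ Q ∧ f^[m] s = f^[n] s := by
    rcases lt_or_gt_of_ne hij with h | h
    · exact ⟨i, j, h, by omega, hfij⟩
    · exact ⟨j, i, h, by omega, hfij.symm⟩
  obtain ⟨hnQ, heq⟩ := heq
  set p := n - m with hp
  have hp1 : 1 ≤ p := by omega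
  have hpQ : p ≤ Q := by omega
  have key : ∀ k, m ≤ k → f^[k + p] s = f^[k] s := by
    intro k hk
    have h1 : k + p = (k - m) + n := by omega
    have h2 : k = (k - m) + m := by omega
    rw [h1, Function.iterate_add_apply, ← heq, ← Function.iterate_add_apply, ← h2]
  have key2 : ∀ c k, m ≤ k → f^[k + c * p] s = f^[k] s := by
    intro c
    induction c with
    | zero => intro k hk; simp
    | succ d ih =>
      intro k hk
      have h1 : k + (d + 1) * p = (k + p) + d * p := by ring
      rw [h1, ih (k + p) (by omega), key k hk]
  have hpdvd : p ∣ b - a := dvd_trans (Nat.dvd_factorial hp1 hpQ) hd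
  obtain ⟨c, hc⟩ := hpdvd
  have hc' : b - a = c * p := by rw [hc, mul_comm]
  have hb : b = a + c * p := by omega
  rw [hb, key2 c a (by omega)]

lemma all_false_foldl_xor : ∀ (l : List Bool), (∀ b ∈ l, b = false) →
    ∀ c, List.foldl xor c l = c := by
  intro l
  induction l with
  | nil => intro _ c; rfl
  | cons h t ih =>
    intro hall c
    have hh : h = false := hall h (by simp)
    rw [List.foldl_cons, hh, Bool.xor_false]
    exact ih (fun b hb => hall b (by simp [hb])) _

lemma enumFrom_replicate_false_all (I : Bool → ℕ → Bool) (hI : ∀ n, I false n = false) :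
    ∀ (k i : ℕ), ∀ b ∈ (List.map (fun q => I q.1 q.2) (List.zipIdx (List.replicate k false) i)),
      b = false := by
  intro k
  induction k with
  | zero => intro i b hb; simp at hb
  | succ j ih =>
    intro i b hb
    rw [List.replicate_succ, List.zipIdx_cons, List.map_cons] at hb
    rcases List.mem_cons.1 hb with h | h
    · rw [h]; exact hI i
    · exact ih (i + 1) b h

/-- `xorSum` of `0^a 1 0^b` is `I true a`, when `I false` is identically false. -/
lemma xorSum_word (I : Bool → ℕ → Bool) (hI : ∀ n, I false n = false) (a b : ℕ) :
    xorSum I (List.replicate a false ++ true :: List.replicate b false) = I true a := by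
  unfold xorSum
  have h1 : List.zipIdx (List.replicate a false ++ true :: List.replicate b false) 0
      = List.zipIdx (List.replicate a false) 0 ++
        List.zipIdx (true :: List.replicate b false) a := by
    simp [List.zipIdx_append, List.length_replicate]
  rw [h1, List.zipIdx_cons, List.map_append, List.foldl_append, List.map_cons,
    List.foldl_cons]
  rw [all_false_foldl_xor _ (enumFrom_replicate_false_all I hI a 0) false]
  rw [all_false_foldl_xor _ (enumFrom_replicate_false_all I hI b (a + 1))]
  simp

theorem exists_sequences_fooling_all_automata :
    ∃ I : Bool → ℕ → Bool, ∀ Q : ℕ, ∃ (t : ℕ) (x y : List Bool),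
      x.length = t ∧ y.length = t ∧ QIndist Q x y ∧ xorSum I x ≠ xorSum I y := by
  refine ⟨fun b n => b && Jseq n, fun Q => ?_⟩
  set N := Q + 2 with hN
  set a := Nat.factorial N with ha
  set b := 2 * Nat.factorial N with hb
  have hab : a ≤ b := by have := Nat.factorial_pos N; omega
  have haQ : Q ≤ a := by have := Nat.self_le_factorial N; omega
  have hdvd : Nat.factorial Q ∣ b - a := by
    have h1 : b - a = Nat.factorial N := by omega
    rw [h1]
    exact Nat.factorial_dvd_factorial (by omega)
  refine ⟨a + 1 + b,
    List.replicate a false ++ true :: List.replicate b false,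
    List.replicate b false ++ true :: List.replicate a false,
    by simp [List.length_append, List.length_replicate]; ring,
    by simp [List.length_append, List.length_replicate]; ring, ?_, ?_⟩
  · -- Q-indistinguishability
    intro S _ hcard δ s
    have haQ' : Fintype.card S ≤ a := by omega
    have hdvd' : Nat.factorial (Fintype.card S) ∣ b - a := by rw [hcard]; exact hdvd
    set f : S → S := fun t => δ t false with hf
    have key : ∀ u : S, f^[a] u = f^[b] u := fun u =>
      iterate_eq_of_mod f u hab haQ' hdvd'
    rw [List.foldl_append, List.foldl_append, List.foldl_cons, List.foldl_cons,
      foldl_replicate, foldl_replicate, foldl_replicate, foldl_replicate]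
    rw [← hf, key s, key (δ (f^[b] s) true)]
  · -- distinct xor sums
    have hI : ∀ n, (fun b n => b && Jseq n) false n = false := fun n => rfl
    rw [xorSum_word _ hI, xorSum_word _ hI]
    simp only [Bool.true_and]
    rw [Jseq_factorial, Jseq_two_mul_factorial (by omega)]
    simp
end
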